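/- Let T be a tree on n ≥ 2 vertices. Let ∂_1 ≥ ∂_2 ≥ ... ≥ ∂_n be the eigenvalues of the distance matrix D(T), and let λ_1 ≥ λ_2 ≥ ... ≥ λ_{n-1} > λ_n = 0 be the eigenvalues of the Laplacian matrix L(T). Then 0 > -2/λ_1 ≥ ∂_2, and for each i with 2 ≤ i ≤ n-1, ∂_i ≥ -2/λ_i ≥ ∂_{i+1} (in particular ∂_{n-1} ≥ -2/λ_{n-1} ≥ ∂_n). -/

import Mathlib

set_option linter.unusedSectionVars false

open Finset

namespace DistPaper

variable {V : Type*} [Fintype V] [DecidableEq V]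

/-- The distance matrix of a graph: the `(u,v)` entry is the graph distance. -/
noncomputable def distMatrix (G : SimpleGraph V) : Matrix V V ℝ :=
  fun u v => (G.dist u v : ℝ)

lemma isHermitian_distMatrix (G : SimpleGraph V) : (distMatrix G).IsHermitian := by
  ext u v
  simp [distMatrix, Matrix.conjTranspose_apply, SimpleGraph.dist_comm]

/-- The `k`-th largest eigenvalue (1-indexed, so `k = 1` is the largest) of the
distance matrix of `G`; junk value `0` if `k - 1 ≥ |V|`. -/
noncomputable def distEig (G : SimpleGraph V) (k : ℕ) : ℝ :=
  if h : k - 1 < Fintype.card V then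
    ((isHermitian_distMatrix G).eigenvalues ∘ (Fintype.equivFin V).symm)
      (Tuple.sort ((isHermitian_distMatrix G).eigenvalues ∘ (Fintype.equivFin V).symm)
        (Fin.rev ⟨k - 1, h⟩))
  else 0

/-- The transmission of a vertex: the sum of the distances to all other vertices. -/
noncomputable def transmission (G : SimpleGraph V) (v : V) : ℕ :=
  ∑ u, G.dist v u

/-- The remoteness of a graph: the maximum over all vertices of the average
distance from that vertex to the others, `ρ = max_v Tr(v)/(n-1)`. -/
noncomputable def remoteness (G : SimpleGraph V) : ℝ :=
  ((univ.sup (transmission G) : ℕ) : ℝ) / ((Fintype.card V : ℝ) - 1)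

/-- `G` is a complete multipartite graph: vertices can be classified so that two
vertices are adjacent iff they lie in different classes. -/
def IsCompleteMultipartite (G : SimpleGraph V) : Prop :=
  ∃ f : V → V, ∀ u v, G.Adj u v ↔ f u ≠ f v

/-- The `k`-th largest eigenvalue (1-indexed) of the Laplacian matrix of `G`;
junk value `0` if `k - 1 ≥ |V|`. -/
noncomputable def lapEig (G : SimpleGraph V) (k : ℕ) : ℝ := by
  classical
  exact if h : k - 1 < Fintype.card V then
    (((SimpleGraph.posSemidef_lapMatrix ℝ G).1).eigenvalues ∘ (Fintype.equivFin V).symm)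
      (Tuple.sort ((((SimpleGraph.posSemidef_lapMatrix ℝ G)).1).eigenvalues ∘ (Fintype.equivFin V).symm)
        (Fin.rev ⟨k - 1, h⟩))
  else 0

/-- The Wiener index: the sum of distances over unordered pairs of vertices. -/
noncomputable def wienerIndex (G : SimpleGraph V) : ℝ :=
  (∑ u, ∑ v, (G.dist u v : ℝ)) / 2


set_option linter.unusedVariables false

open Matrix SimpleGraph


/-! ### Sorting helpers -/

noncomputable def dsort {N : ℕ} (g : Fin N → ℝ) (k : Fin N) : ℝ := g (Tuple.sort g k.rev)

lemma dsort_anti {N : ℕ} (g : Fin N → ℝ) : Antitone (dsort g) := by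
  intro a b hab
  exact Tuple.monotone_sort g (Fin.rev_le_rev.mpr hab)

lemma card_dsort_between {N : ℕ} (g : Fin N → ℝ) {p q : Fin N} (hpq : p ≤ q) :
    (q : ℕ) - p + 1 ≤ (univ.filter (fun j => dsort g q ≤ g j ∧ g j ≤ dsort g p)).card := by
  classical
  have hinj : Function.Injective (fun k : Fin N => Tuple.sort g k.rev) :=
    (Tuple.sort g).injective.comp (fun a b h => Fin.rev_injective h)
  have hcard : ((Finset.Icc p q).image (fun k => Tuple.sort g k.rev)).card = (q : ℕ) - p + 1 := by
    rw [Finset.card_image_of_injective _ hinj, Fin.card_Icc]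
    omega
  rw [← hcard]
  apply Finset.card_le_card
  intro j hj
  simp only [Finset.mem_image, Finset.mem_Icc] at hj
  obtain ⟨k, ⟨hk1, hk2⟩, rfl⟩ := hj
  simp only [Finset.mem_filter, Finset.mem_univ, true_and]
  exact ⟨dsort_anti g hk2, dsort_anti g hk1⟩

lemma card_dsort_ge {N : ℕ} (g : Fin N → ℝ) (p : Fin N) :
    (p : ℕ) + 1 ≤ (univ.filter (fun j => dsort g p ≤ g j)).card := by
  classical
  have h0 : (⟨0, Nat.lt_of_le_of_lt (Nat.zero_le _) p.isLt⟩ : Fin N) ≤ p := by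
    simp [Fin.le_def]
  have h := card_dsort_between g h0
  simp only [Fin.val_mk, Nat.sub_zero] at h
  refine le_trans h (Finset.card_le_card ?_)
  intro j hj
  simp only [Finset.mem_filter, Finset.mem_univ, true_and] at hj ⊢
  exact hj.1

lemma card_dsort_le {N : ℕ} (g : Fin N → ℝ) (p : Fin N) :
    N - (p : ℕ) ≤ (univ.filter (fun j => g j ≤ dsort g p)).card := by
  classical
  have hN : 0 < N := Nat.lt_of_le_of_lt (Nat.zero_le _) p.isLt
  have hp : p ≤ (⟨N-1, by omega⟩ : Fin N) := by
    simp [Fin.le_def]; omega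
  have h := card_dsort_between g hp
  simp only [Fin.val_mk] at h
  refine le_trans (by omega) (le_trans h (Finset.card_le_card ?_))
  intro j hj
  simp only [Finset.mem_filter, Finset.mem_univ, true_and] at hj ⊢
  exact hj.2

/-! ### Linear algebra helpers -/

section LinAlg
variable {ι : Type*} [Fintype ι] [DecidableEq ι]

lemma sum_dotProduct' {α : Type*} {s : Finset α} (f : α → (V → ℝ)) (y : V → ℝ) :
    (∑ i ∈ s, f i) ⬝ᵥ y = ∑ i ∈ s, f i ⬝ᵥ y := by
  simp only [dotProduct, Finset.sum_apply, Finset.sum_mul]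
  exact Finset.sum_comm

lemma dotProduct_sum' {α : Type*} {s : Finset α} (f : α → (V → ℝ)) (y : V → ℝ) :
    y ⬝ᵥ (∑ i ∈ s, f i) = ∑ i ∈ s, y ⬝ᵥ f i := by
  simp only [dotProduct, Finset.sum_apply, Finset.mul_sum]
  exact Finset.sum_comm

lemma linearIndependent_of_ortho (v : ι → (V → ℝ))
    (hv : ∀ i j, v i ⬝ᵥ v j = if i = j then 1 else 0) : LinearIndependent ℝ v := by
  rw [linearIndependent_iff']
  intro s c hsum i hi
  have h2 := congrArg (fun x => x ⬝ᵥ v i) hsum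
  simp only [sum_dotProduct', smul_dotProduct, hv, smul_eq_mul,
    zero_dotProduct] at h2
  rw [Finset.sum_eq_single i (fun b _ hb => by rw [if_neg hb, mul_zero]) (fun h => absurd hi h)] at h2
  simpa using h2

lemma quadform_bound_on_span (A : Matrix V V ℝ) (v : ι → (V → ℝ))
    (hv : ∀ i j, v i ⬝ᵥ v j = if i = j then 1 else 0)
    (w : ι → ℝ) (hAv : ∀ i j, v i ⬝ᵥ (A *ᵥ v j) = if i = j then w i else 0)
    (t : ℝ) (x : V → ℝ) (hx : x ∈ Submodule.span ℝ (Set.range v)) :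
    ((∀ i, t ≤ w i) → t * (x ⬝ᵥ x) ≤ x ⬝ᵥ (A *ᵥ x)) ∧
    ((∀ i, w i ≤ t) → x ⬝ᵥ (A *ᵥ x) ≤ t * (x ⬝ᵥ x)) := by
  classical
  obtain ⟨c, rfl⟩ := (Submodule.mem_span_range_iff_exists_fun (R := ℝ)).mp hx
  have hxx : (∑ i, c i • v i) ⬝ᵥ (∑ i, c i • v i) = ∑ i, c i ^ 2 := by
    simp only [sum_dotProduct', smul_dotProduct, dotProduct_sum',
      dotProduct_smul, hv, smul_eq_mul, mul_ite, mul_one, mul_zero,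
      Finset.sum_ite_eq', Finset.mem_univ, if_true]
    simp [pow_two]
  have hAx : (∑ i, c i • v i) ⬝ᵥ (A *ᵥ (∑ i, c i • v i)) = ∑ i, c i ^ 2 * w i := by
    have hmv : A *ᵥ (∑ i, c i • v i) = ∑ i, c i • (A *ᵥ v i) := by
      rw [← Matrix.mulVecLin_apply, map_sum]
      simp [Matrix.mulVecLin_apply]
    rw [hmv]
    simp only [sum_dotProduct', smul_dotProduct, dotProduct_sum',
      dotProduct_smul, hAv, smul_eq_mul, mul_ite, mul_zero,
      Finset.sum_ite_eq', Finset.mem_univ, if_true]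
    exact Finset.sum_congr rfl (fun i _ => by ring)
  rw [hxx, hAx]
  constructor
  · intro hw
    rw [Finset.mul_sum]
    refine Finset.sum_le_sum fun i _ => ?_
    calc t * c i ^ 2 = c i ^ 2 * t := by ring
    _ ≤ c i ^ 2 * w i := mul_le_mul_of_nonneg_left (hw i) (sq_nonneg _)
  · intro hw
    rw [Finset.mul_sum]
    refine Finset.sum_le_sum fun i _ => ?_
    calc c i ^ 2 * w i ≤ c i ^ 2 * t := mul_le_mul_of_nonneg_left (hw i) (sq_nonneg _)
    _ = t * c i ^ 2 := by ring

lemma exists_ne_zero_mem_inf {S₁ S₂ : Submodule ℝ (V → ℝ)}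
    (h : Fintype.card V < Module.finrank ℝ S₁ + Module.finrank ℝ S₂) :
    ∃ x, x ≠ 0 ∧ x ∈ S₁ ∧ x ∈ S₂ := by
  have hsum := Submodule.finrank_sup_add_finrank_inf_eq S₁ S₂
  have hle : Module.finrank ℝ ↥(S₁ ⊔ S₂) ≤ Fintype.card V := by
    have h2 := Submodule.finrank_le (S₁ ⊔ S₂)
    simpa [Module.finrank_pi] using h2
  have hpos : 0 < Module.finrank ℝ ↥(S₁ ⊓ S₂) := by omega
  haveI : Nontrivial ↥(S₁ ⊓ S₂) := Module.finrank_pos_iff.mp hpos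
  obtain ⟨⟨x, hx⟩, hxne⟩ := exists_ne (0 : ↥(S₁ ⊓ S₂))
  exact ⟨x, by simpa [Submodule.mk_eq_zero] using hxne, hx.1, hx.2⟩

/-- the span of an orthonormal family indexed by a finset, with quadratic form bounds -/
lemma span_package (A : Matrix V V ℝ) (u : V → (V → ℝ))
    (hu : ∀ i j, u i ⬝ᵥ u j = if i = j then 1 else 0)
    (w : V → ℝ) (J : Finset V)
    (hAv : ∀ i ∈ J, ∀ j ∈ J, u i ⬝ᵥ (A *ᵥ u j) = if i = j then w i else 0) :
    ∃ S : Submodule ℝ (V → ℝ), Module.finrank ℝ S = J.card ∧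
      (∀ t, (∀ i ∈ J, t ≤ w i) → ∀ x ∈ S, t * (x ⬝ᵥ x) ≤ x ⬝ᵥ (A *ᵥ x)) ∧
      (∀ t, (∀ i ∈ J, w i ≤ t) → ∀ x ∈ S, x ⬝ᵥ (A *ᵥ x) ≤ t * (x ⬝ᵥ x)) := by
  classical
  set v : {x // x ∈ J} → (V → ℝ) := fun j => u j with hv
  have hvo : ∀ i j : {x // x ∈ J}, v i ⬝ᵥ v j = if i = j then 1 else 0 := by
    intro i j
    rw [hu]
    by_cases h : i = j
    · rw [if_pos h, if_pos (by rw [h])]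
    · rw [if_neg h, if_neg (fun hc => h (Subtype.ext hc))]
  have hvA : ∀ i j : {x // x ∈ J}, v i ⬝ᵥ (A *ᵥ v j) = if i = j then w i else 0 := by
    intro i j
    rw [hAv i i.2 j j.2]
    by_cases h : i = j
    · rw [if_pos h, if_pos (by rw [h])]
    · rw [if_neg h, if_neg (fun hc => h (Subtype.ext hc))]
  refine ⟨Submodule.span ℝ (Set.range v), ?_, ?_, ?_⟩
  · rw [finrank_span_eq_card (linearIndependent_of_ortho v hvo), Fintype.card_coe]
  · intro t ht x hx
    exact (quadform_bound_on_span A v hvo (fun i => w i) hvA t x hx).1 (fun i => ht i i.2)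
  · intro t ht x hx
    exact (quadform_bound_on_span A v hvo (fun i => w i) hvA t x hx).2 (fun i => ht i i.2)

lemma dotProduct_self_pos {x : V → ℝ} (hx : x ≠ 0) : 0 < x ⬝ᵥ x := by
  have hne : x ⬝ᵥ x ≠ 0 := fun h => hx (dotProduct_self_eq_zero.mp h)
  have hnn : 0 ≤ x ⬝ᵥ x := Finset.sum_nonneg fun i _ => mul_self_nonneg (x i)
  exact lt_of_le_of_ne hnn (Ne.symm hne)

/-- abstract interlacing step -/
lemma step_le {A : Matrix V V ℝ} {a b : ℝ} {S₁ S₂ : Submodule ℝ (V → ℝ)}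
    (h₁ : ∀ x ∈ S₁, a * (x ⬝ᵥ x) ≤ x ⬝ᵥ (A *ᵥ x))
    (h₂ : ∀ x ∈ S₂, x ⬝ᵥ (A *ᵥ x) ≤ b * (x ⬝ᵥ x))
    (hcard : Fintype.card V < Module.finrank ℝ S₁ + Module.finrank ℝ S₂) :
    a ≤ b := by
  obtain ⟨x, hx0, hx1, hx2⟩ := exists_ne_zero_mem_inf hcard
  have := (h₁ x hx1).trans (h₂ x hx2)
  have hpos := dotProduct_self_pos hx0
  exact le_of_mul_le_mul_right (by linarith) hpos

/-- transfer of filter cardinalities along the Fintype equiv -/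
lemma card_filter_transfer (g : V → ℝ) (P : ℝ → Prop) [DecidablePred P] :
    (univ.filter (fun j : Fin (Fintype.card V) => P (g ((Fintype.equivFin V).symm j)))).card
      = (univ.filter (fun v : V => P (g v))).card := by
  apply Finset.card_equiv (Fintype.equivFin V).symm
  intro j
  simp

end LinAlg

section Graph
variable {T : SimpleGraph V}



lemma length_eq_dist_of_isPath (hT : T.IsTree) {x y : V} (p : T.Walk x y) (hp : p.IsPath) :
    p.length = T.dist x y := by
  obtain ⟨q, hq, hql⟩ := (hT.isConnected.preconnected x y).exists_path_of_dist
  rw [← hql]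
  exact congrArg Walk.length ((hT.existsUnique_path x y).unique hp hq)

lemma not_mem_support_of_lt_dist (hconn : T.Connected) {x v y : V} (p : T.Walk x y)
    (hlt : p.length < T.dist x v) : v ∉ p.support := by
  intro hv
  have h1 := SimpleGraph.dist_le (p.takeUntil v hv)
  have h2 := SimpleGraph.Walk.length_takeUntil_le p hv
  omega

lemma isPath_concat {x y v : V} {p : T.Walk x y} (hp : p.IsPath) (h : T.Adj y v)
    (hv : v ∉ p.support) : (p.concat h).IsPath := by
  have h1 : (p.concat h).reverse.IsPath := by
    rw [SimpleGraph.Walk.reverse_concat]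
    exact Walk.IsPath.cons hp.reverse (by simpa [Walk.support_reverse] using hv) (h := h.symm)
  have h2 := h1.reverse
  rwa [Walk.reverse_reverse] at h2

lemma tree_dist_adj (hT : T.IsTree) (x v y : V) (h : T.Adj v y) :
    T.dist x y + 1 = T.dist x v ∨ T.dist x v + 1 = T.dist x y := by
  have hconn := hT.isConnected
  have h1 : T.dist x y ≤ T.dist x v + 1 := by
    have ht := hconn.dist_triangle (u := x) (v := v) (w := y)
    have : T.dist v y = 1 := SimpleGraph.dist_eq_one_iff_adj.mpr h
    omega
  have h2 : T.dist x v ≤ T.dist x y + 1 := by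
    have ht := hconn.dist_triangle (u := x) (v := y) (w := v)
    have : T.dist y v = 1 := SimpleGraph.dist_eq_one_iff_adj.mpr h.symm
    omega
  have hne : T.dist x y ≠ T.dist x v := by
    intro heq
    obtain ⟨p, hp, hlen⟩ := (hconn.preconnected x y).exists_path_of_dist
    have hvy : v ≠ y := h.ne
    have hvp : v ∉ p.support := by
      intro hv
      have hspec := p.take_spec hv
      have hlen2 := congrArg Walk.length hspec
      rw [Walk.length_append] at hlen2
      have hd1 := SimpleGraph.dist_le (p.takeUntil v hv)
      have hd2 : 1 ≤ (p.dropUntil v hv).length := by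
        have := SimpleGraph.dist_le (p.dropUntil v hv)
        have h3 : T.dist v y = 1 := SimpleGraph.dist_eq_one_iff_adj.mpr h
        omega
      omega
    have hq : (p.concat h.symm).IsPath := isPath_concat hp h.symm hvp
    have := length_eq_dist_of_isPath hT _ hq
    rw [Walk.length_concat] at this
    omega
  omega

lemma tree_pred_existsUnique (hT : T.IsTree) {x v : V} (hxv : x ≠ v) :
    ∃! y, T.Adj v y ∧ T.dist x y + 1 = T.dist x v := by
  have hconn := hT.isConnected
  have hd : 0 < T.dist x v := hconn.pos_dist_of_ne hxv
  obtain ⟨p, hp, hlen⟩ := (hconn.preconnected x v).exists_path_of_dist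
  cases hr : p.reverse with
  | nil =>
    exfalso
    have : p.length = 0 := by
      have := congrArg Walk.length hr
      simpa using this
    omega
  | cons h' q =>
    rename_i y₀
    have hpeq : q.reverse.concat h'.symm = p := by
      rw [Walk.concat_eq_append, ← Walk.reverse_cons (h := h'), ← hr, Walk.reverse_reverse]
    have hq : q.reverse.IsPath := by
      have : (Walk.cons h' q).IsPath := by rw [← hr]; exact hp.reverse
      exact this.of_cons.reverse
    have hql : q.reverse.length + 1 = T.dist x v := by
      have := congrArg Walk.length hpeq
      rw [Walk.length_concat] at this
      omega
    have hdy₀ : T.dist x y₀ + 1 = T.dist x v := by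
      rw [← length_eq_dist_of_isPath hT _ hq]; exact hql
    refine ⟨y₀, ⟨h', hdy₀⟩, ?_⟩
    rintro y₁ ⟨hadj₁, hd₁⟩
    obtain ⟨p₁, hp₁, hlen₁⟩ := (hconn.preconnected x y₁).exists_path_of_dist
    have hvp₁ : v ∉ p₁.support :=
      not_mem_support_of_lt_dist hconn p₁ (by omega)
    have hq₁ : (p₁.concat hadj₁.symm).IsPath := isPath_concat hp₁ hadj₁.symm hvp₁
    have : p₁.concat hadj₁.symm = q.reverse.concat h'.symm := by
      rw [hpeq]
      exact (hT.existsUnique_path x v).unique hq₁ hp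
    obtain ⟨hv, -⟩ := Walk.concat_inj this
    exact hv

lemma sum_dist_neighbors (hT : T.IsTree) [DecidableRel T.Adj] {x v : V} (hxv : x ≠ v) :
    ∑ y ∈ T.neighborFinset v, (T.dist x y : ℝ) =
      (T.degree v : ℝ) * ((T.dist x v : ℝ) + 1) - 2 := by
  obtain ⟨y₀, ⟨hadj₀, hd₀⟩, huniq⟩ := tree_pred_existsUnique hT hxv
  have hy₀ : y₀ ∈ T.neighborFinset v := by rwa [mem_neighborFinset]
  rw [← Finset.add_sum_erase _ _ hy₀]
  have hrest : ∀ y ∈ (T.neighborFinset v).erase y₀, (T.dist x y : ℝ) = (T.dist x v : ℝ) + 1 := by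
    intro y hy
    obtain ⟨hyne, hymem⟩ := Finset.mem_erase.mp hy
    have hadj : T.Adj v y := (mem_neighborFinset _ _ _).mp hymem
    rcases tree_dist_adj hT x v y hadj with hcase | hcase
    · exact absurd (huniq y ⟨hadj, hcase⟩) hyne
    · rw [← hcase]; push_cast; ring
  rw [Finset.sum_congr rfl hrest, Finset.sum_const, Finset.card_erase_of_mem hy₀]
  have hdeg : 1 ≤ T.degree v := by
    rw [← SimpleGraph.card_neighborFinset_eq_degree]
    exact Finset.card_pos.mpr ⟨y₀, hy₀⟩
  have hcast : (T.dist x y₀ : ℝ) = (T.dist x v : ℝ) - 1 := by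
    have : ((T.dist x y₀ : ℝ) + 1) = (T.dist x v : ℝ) := by exact_mod_cast congrArg (Nat.cast : ℕ → ℝ) hd₀
    linarith
  rw [hcast, ← SimpleGraph.card_neighborFinset_eq_degree, nsmul_eq_mul,
    Nat.cast_sub (by rwa [← SimpleGraph.card_neighborFinset_eq_degree] at hdeg)]
  push_cast
  ring

lemma DL_entry (hT : T.IsTree) [DecidableRel T.Adj] (x v : V) :
    (distMatrix T * T.lapMatrix ℝ) x v
      = (2 - (T.degree v : ℝ)) - (if x = v then 2 else 0) := by
  classical
  rw [Matrix.mul_apply]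
  have hterm : ∀ y, distMatrix T x y * T.lapMatrix ℝ y v
      = (T.dist x y : ℝ) * (if y = v then (T.degree y : ℝ) else 0)
        - (T.dist x y : ℝ) * (if T.Adj y v then 1 else 0) := by
    intro y
    simp only [SimpleGraph.lapMatrix, Matrix.sub_apply, SimpleGraph.degMatrix,
      Matrix.diagonal_apply, SimpleGraph.adjMatrix_apply, distMatrix]
    ring
  rw [Finset.sum_congr rfl (fun y _ => hterm y), Finset.sum_sub_distrib]
  have h1 : ∑ y, (T.dist x y : ℝ) * (if y = v then (T.degree y : ℝ) else 0)
      = (T.dist x v : ℝ) * (T.degree v : ℝ) := by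
    rw [Finset.sum_eq_single v (fun b _ hb => by rw [if_neg hb, mul_zero])
      (fun h => absurd (Finset.mem_univ v) h)]
    rw [if_pos rfl]
  have h2 : ∑ y, (T.dist x y : ℝ) * (if T.Adj y v then 1 else 0)
      = ∑ y ∈ T.neighborFinset v, (T.dist x y : ℝ) := by
    rw [Finset.sum_congr rfl (fun y _ => by rw [mul_ite, mul_one, mul_zero]),
      ← Finset.sum_filter]
    apply Finset.sum_congr _ (fun y _ => rfl)
    ext y
    simp [SimpleGraph.mem_neighborFinset, SimpleGraph.adj_comm]
  rw [h1, h2]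
  by_cases hxv : x = v
  · subst hxv
    have hnb : ∀ y ∈ T.neighborFinset x, (T.dist x y : ℝ) = 1 := by
      intro y hy
      have : T.dist x y = 1 :=
        SimpleGraph.dist_eq_one_iff_adj.mpr ((mem_neighborFinset _ _ _).mp hy)
      exact_mod_cast congrArg (Nat.cast : ℕ → ℝ) this
    rw [Finset.sum_congr rfl hnb, Finset.sum_const, nsmul_eq_mul, mul_one,
      SimpleGraph.card_neighborFinset_eq_degree, SimpleGraph.dist_self, if_pos rfl]
    push_cast
    ring
  · rw [sum_dist_neighbors hT hxv, if_neg hxv]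
    ring

lemma LDL_eq (hT : T.IsTree) [DecidableRel T.Adj] :
    T.lapMatrix ℝ * (distMatrix T * T.lapMatrix ℝ) = (-2 : ℝ) • T.lapMatrix ℝ := by
  classical
  ext u v
  rw [Matrix.mul_apply]
  have hterm : ∀ x, T.lapMatrix ℝ u x * (distMatrix T * T.lapMatrix ℝ) x v
      = T.lapMatrix ℝ u x * (2 - (T.degree v : ℝ)) - T.lapMatrix ℝ u x * (if x = v then 2 else 0) := by
    intro x
    rw [DL_entry hT]
    ring
  rw [Finset.sum_congr rfl (fun x _ => hterm x), Finset.sum_sub_distrib]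
  have hrow : ∑ x, T.lapMatrix ℝ u x = 0 := by
    have h := congrFun (SimpleGraph.lapMatrix_mulVec_const_eq_zero (R := ℝ) (G := T)) u
    simpa [Matrix.mulVec, dotProduct] using h
  rw [← Finset.sum_mul, hrow, zero_mul]
  have h2 : ∑ x, T.lapMatrix ℝ u x * (if x = v then 2 else 0) = T.lapMatrix ℝ u v * 2 := by
    rw [Finset.sum_eq_single v (fun b _ hb => by rw [if_neg hb, mul_zero])
      (fun h => absurd (Finset.mem_univ v) h), if_pos rfl]
  rw [h2, Matrix.smul_apply, smul_eq_mul]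
  ring



/-- dot-product orthonormality of an orthonormal basis of EuclideanSpace -/
lemma dot_ortho {A : Matrix V V ℝ} (hA : A.IsHermitian) (i j : V) :
    ⇑(hA.eigenvectorBasis i) ⬝ᵥ ⇑(hA.eigenvectorBasis j)
      = if i = j then 1 else 0 := by
  have h := orthonormal_iff_ite.mp hA.eigenvectorBasis.orthonormal i j
  rw [← h]
  simp [PiLp.inner_apply, RCLike.inner_apply, dotProduct, mul_comm]

lemma dot_eig {A : Matrix V V ℝ} (hA : A.IsHermitian) (i j : V) :
    ⇑(hA.eigenvectorBasis i) ⬝ᵥ (A *ᵥ ⇑(hA.eigenvectorBasis j))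
      = if i = j then hA.eigenvalues i else 0 := by
  rw [hA.mulVec_eigenvectorBasis j, dotProduct_smul, smul_eq_mul, dot_ortho hA i j]
  by_cases h : i = j
  · subst h; simp
  · simp [h]

/-- the key computation: L-eigenvectors with nonzero eigenvalue diagonalize D with
values -2/eigenvalue. -/
lemma dot_dist_eig (hT : T.IsTree) [DecidableRel T.Adj]
    (hL : (T.lapMatrix ℝ).IsHermitian) (i j : V)
    (hi : hL.eigenvalues i ≠ 0) (hj : hL.eigenvalues j ≠ 0) :
    ⇑(hL.eigenvectorBasis i) ⬝ᵥ (distMatrix T *ᵥ ⇑(hL.eigenvectorBasis j))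
      = if i = j then -2 / hL.eigenvalues i else 0 := by
  set u : V → V → ℝ := fun k => ⇑(hL.eigenvectorBasis k) with hu
  set f : V → ℝ := hL.eigenvalues with hf
  have hmv : ∀ k, T.lapMatrix ℝ *ᵥ u k = f k • u k := fun k => hL.mulVec_eigenvectorBasis k
  have hsymm : (T.lapMatrix ℝ)ᵀ = T.lapMatrix ℝ := T.isSymm_lapMatrix (R := ℝ)
  have hvm : ∀ k, u k ᵥ* T.lapMatrix ℝ = f k • u k := by
    intro k
    rw [← Matrix.mulVec_transpose, hsymm, hmv]
  have key : u i ⬝ᵥ ((T.lapMatrix ℝ * (distMatrix T * T.lapMatrix ℝ)) *ᵥ u j)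
      = f i * (f j * (u i ⬝ᵥ (distMatrix T *ᵥ u j))) := by
    rw [← Matrix.mulVec_mulVec, ← Matrix.mulVec_mulVec, Matrix.dotProduct_mulVec, hvm,
      hmv, Matrix.mulVec_smul, smul_dotProduct, dotProduct_smul]
    simp only [smul_eq_mul]
    try ring
  rw [LDL_eq hT] at key
  have key2 : u i ⬝ᵥ (((-2 : ℝ) • T.lapMatrix ℝ) *ᵥ u j) = -2 * (f j * (if i = j then 1 else 0)) := by
    rw [Matrix.smul_mulVec, dotProduct_smul, hmv, dotProduct_smul]
    simp only [smul_eq_mul, show u i ⬝ᵥ u j = _ from dot_ortho hL i j]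
    try ring
  rw [key2] at key
  by_cases h : i = j
  · subst h
    rw [if_pos rfl] at key ⊢
    have h3 : f i * (-2) = f i * (f i * (u i ⬝ᵥ (distMatrix T *ᵥ u i))) := by linarith
    have h4 := mul_left_cancel₀ hi h3
    rw [eq_div_iff hi]
    linarith
  · rw [if_neg h] at key ⊢
    have h5 : f i * (f j * (u i ⬝ᵥ (distMatrix T *ᵥ u j))) = 0 := by linarith
    rcases mul_eq_zero.mp h5 with h1 | h6
    · exact absurd h1 hi
    rcases mul_eq_zero.mp h6 with h1 | h7
    · exact absurd h1 hj
    · exact h7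

/-- in a connected graph, at most one eigenvalue of the Laplacian is zero -/
lemma card_zero_eigs_le_one (hT : T.IsTree) [DecidableRel T.Adj]
    (hL : (T.lapMatrix ℝ).IsHermitian) :
    (univ.filter (fun v : V => hL.eigenvalues v = 0)).card ≤ 1 := by
  classical
  have hker : Fintype.card T.ConnectedComponent =
      Module.finrank ℝ (LinearMap.ker (Matrix.toLin' (T.lapMatrix ℝ))) :=
    T.card_connectedComponent_eq_finrank_ker_toLin'_lapMatrix
  have hcc : Fintype.card T.ConnectedComponent = 1 := by
    rw [Fintype.card_eq_one_iff]
    have ⟨v₀⟩ : Nonempty V := hT.isConnected.nonempty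
    refine ⟨T.connectedComponentMk v₀, ?_⟩
    intro c
    induction c using SimpleGraph.ConnectedComponent.ind with
    | _ w => exact SimpleGraph.ConnectedComponent.sound (hT.isConnected.preconnected w v₀)
  have htl : Matrix.toLin' (T.lapMatrix ℝ) = Matrix.mulVecLin (T.lapMatrix ℝ) := by
    ext x
    simp [Matrix.toLin'_apply, Matrix.mulVecLin_apply]
  have hrn := LinearMap.finrank_range_add_finrank_ker (Matrix.mulVecLin (T.lapMatrix ℝ))
  have hpi : Module.finrank ℝ (V → ℝ) = Fintype.card V := Module.finrank_pi ℝ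
  have hrank : (T.lapMatrix ℝ).rank = Fintype.card V - 1 := by
    rw [Matrix.rank]
    rw [htl, hcc] at hker
    omega
  have hnz := hL.rank_eq_card_non_zero_eigs
  rw [hrank, Fintype.card_subtype] at hnz
  have hsplit := Finset.card_filter_add_card_filter_not
    (s := (univ : Finset V)) (p := fun v => hL.eigenvalues v = 0)
  have hV : 0 < Fintype.card V := Fintype.card_pos_iff.mpr hT.isConnected.nonempty
  rw [Finset.card_univ] at hsplit
  simp only [ne_eq] at hnz hsplit
  omega

end Graph

section CardPrime

lemma card_dsort_ge' (g : V → ℝ) (p : Fin (Fintype.card V)) :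
    (p : ℕ) + 1 ≤ (univ.filter
      (fun v : V => dsort (g ∘ (Fintype.equivFin V).symm) p ≤ g v)).card := by
  refine le_trans (card_dsort_ge (g ∘ (Fintype.equivFin V).symm) p) (le_of_eq ?_)
  exact card_filter_transfer g (fun r => dsort (g ∘ (Fintype.equivFin V).symm) p ≤ r)

lemma card_dsort_le' (g : V → ℝ) (p : Fin (Fintype.card V)) :
    Fintype.card V - (p : ℕ) ≤ (univ.filter
      (fun v : V => g v ≤ dsort (g ∘ (Fintype.equivFin V).symm) p)).card := by
  refine le_trans (card_dsort_le (g ∘ (Fintype.equivFin V).symm) p) (le_of_eq ?_)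
  exact card_filter_transfer g (fun r => r ≤ dsort (g ∘ (Fintype.equivFin V).symm) p)

lemma card_dsort_between' (g : V → ℝ) {p q : Fin (Fintype.card V)} (hpq : p ≤ q) :
    (q : ℕ) - p + 1 ≤ (univ.filter
      (fun v : V => dsort (g ∘ (Fintype.equivFin V).symm) q ≤ g v ∧
        g v ≤ dsort (g ∘ (Fintype.equivFin V).symm) p)).card := by
  refine le_trans (card_dsort_between (g ∘ (Fintype.equivFin V).symm) hpq) (le_of_eq ?_)
  exact card_filter_transfer g (fun r => dsort (g ∘ (Fintype.equivFin V).symm) q ≤ r ∧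
    r ≤ dsort (g ∘ (Fintype.equivFin V).symm) p)

lemma neg_two_div_le {a b : ℝ} (ha : 0 < a) (hab : a ≤ b) : -2 / a ≤ -2 / b := by
  have hb : 0 < b := lt_of_lt_of_le ha hab
  rw [div_le_div_iff₀ ha hb]
  nlinarith

end CardPrime

section Core

theorem interlace_core (T : SimpleGraph V) (hT : T.IsTree)
    [inst : DecidableRel T.Adj] (hL : (T.lapMatrix ℝ).IsHermitian)
    (p : Fin (Fintype.card V)) (hp : (p : ℕ) + 2 ≤ Fintype.card V) :
    0 < dsort (hL.eigenvalues ∘ (Fintype.equivFin V).symm) p ∧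
    -2 / dsort (hL.eigenvalues ∘ (Fintype.equivFin V).symm) p
        ≤ dsort ((isHermitian_distMatrix T).eigenvalues ∘ (Fintype.equivFin V).symm) p ∧
    dsort ((isHermitian_distMatrix T).eigenvalues ∘ (Fintype.equivFin V).symm)
        ⟨(p : ℕ) + 1, by omega⟩
        ≤ -2 / dsort (hL.eigenvalues ∘ (Fintype.equivFin V).symm) p := by
  classical
  have hfnn : ∀ v, 0 ≤ hL.eigenvalues v := fun v =>
    (SimpleGraph.posSemidef_lapMatrix ℝ T).eigenvalues_nonneg v
  have hzero := card_zero_eigs_le_one hT hL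
  -- positivity of all but the last sorted Laplacian eigenvalue
  have hpos : ∀ q : Fin (Fintype.card V), (q : ℕ) + 2 ≤ Fintype.card V →
      0 < dsort (hL.eigenvalues ∘ (Fintype.equivFin V).symm) q := by
    intro q hq
    by_contra hle
    push_neg at hle
    have hnnq : 0 ≤ dsort (hL.eigenvalues ∘ (Fintype.equivFin V).symm) q := hfnn _
    have hzq : dsort (hL.eigenvalues ∘ (Fintype.equivFin V).symm) q = 0 :=
      le_antisymm hle hnnq
    have hcard := card_dsort_le' hL.eigenvalues q
    have hsub : (univ.filter
        (fun v : V => hL.eigenvalues v ≤ dsort (hL.eigenvalues ∘ (Fintype.equivFin V).symm) q)).card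
        ≤ (univ.filter (fun v : V => hL.eigenvalues v = 0)).card := by
      apply Finset.card_le_card
      intro v hv
      simp only [Finset.mem_filter, Finset.mem_univ, true_and] at hv ⊢
      rw [hzq] at hv
      exact le_antisymm hv (hfnn _)
    omega
  have hppos := hpos p hp
  refine ⟨hppos, ?_, ?_⟩
  -- shared data
  · -- -2/λ_p ≤ ∂_p
    obtain ⟨S₁, hS₁rank, hS₁lo, -⟩ := span_package (distMatrix T)
      (fun v => ⇑(hL.eigenvectorBasis v)) (dot_ortho hL)
      (fun v => -2 / hL.eigenvalues v)
      (univ.filter (fun v => dsort (hL.eigenvalues ∘ (Fintype.equivFin V).symm) p ≤ hL.eigenvalues v))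
      (by
        intro i hi j hj
        simp only [Finset.mem_filter, Finset.mem_univ, true_and] at hi hj
        exact dot_dist_eig hT hL i j (ne_of_gt (lt_of_lt_of_le hppos hi))
          (ne_of_gt (lt_of_lt_of_le hppos hj)))
    obtain ⟨S₂, hS₂rank, -, hS₂hi⟩ := span_package (distMatrix T)
      (fun v => ⇑((isHermitian_distMatrix T).eigenvectorBasis v))
      (dot_ortho (isHermitian_distMatrix T))
      ((isHermitian_distMatrix T).eigenvalues)
      (univ.filter (fun v => (isHermitian_distMatrix T).eigenvalues v
         ≤ dsort ((isHermitian_distMatrix T).eigenvalues ∘ (Fintype.equivFin V).symm) p))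
      (fun i _ j _ => dot_eig (isHermitian_distMatrix T) i j)
    refine step_le
      (hS₁lo _ (fun i hi => by
        simp only [Finset.mem_filter, Finset.mem_univ, true_and] at hi
        exact neg_two_div_le hppos hi))
      (hS₂hi _ (fun i hi => by
        simp only [Finset.mem_filter, Finset.mem_univ, true_and] at hi
        exact hi)) ?_
    rw [hS₁rank, hS₂rank]
    have h1 := card_dsort_ge' hL.eigenvalues p
    have h2 := card_dsort_le' ((isHermitian_distMatrix T).eigenvalues) p
    omega
  · -- ∂_{p+1} ≤ -2/λ_p
    have hq2 : ((⟨Fintype.card V - 2, by omega⟩ : Fin (Fintype.card V)) : ℕ) + 2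
        ≤ Fintype.card V := by simp; omega
    have hqpos := hpos ⟨Fintype.card V - 2, by omega⟩ hq2
    obtain ⟨S₁, hS₁rank, -, hS₁hi⟩ := span_package (distMatrix T)
      (fun v => ⇑(hL.eigenvectorBasis v)) (dot_ortho hL)
      (fun v => -2 / hL.eigenvalues v)
      (univ.filter (fun v => 0 < hL.eigenvalues v ∧
        hL.eigenvalues v ≤ dsort (hL.eigenvalues ∘ (Fintype.equivFin V).symm) p))
      (by
        intro i hi j hj
        simp only [Finset.mem_filter, Finset.mem_univ, true_and] at hi hj
        exact dot_dist_eig hT hL i j (ne_of_gt hi.1) (ne_of_gt hj.1))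
    obtain ⟨S₂, hS₂rank, hS₂lo, -⟩ := span_package (distMatrix T)
      (fun v => ⇑((isHermitian_distMatrix T).eigenvectorBasis v))
      (dot_ortho (isHermitian_distMatrix T))
      ((isHermitian_distMatrix T).eigenvalues)
      (univ.filter (fun v =>
        dsort ((isHermitian_distMatrix T).eigenvalues ∘ (Fintype.equivFin V).symm)
          ⟨(p : ℕ) + 1, by omega⟩ ≤ (isHermitian_distMatrix T).eigenvalues v))
      (fun i _ j _ => dot_eig (isHermitian_distMatrix T) i j)
    refine step_le
      (hS₂lo _ (fun i hi => by
        simp only [Finset.mem_filter, Finset.mem_univ, true_and] at hi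
        exact hi))
      (hS₁hi _ (fun i hi => by
        simp only [Finset.mem_filter, Finset.mem_univ, true_and] at hi
        exact neg_two_div_le hi.1 hi.2)) ?_
    rw [hS₁rank, hS₂rank]
    have h1 := card_dsort_between' hL.eigenvalues
      (p := p) (q := ⟨Fintype.card V - 2, by omega⟩) (by rw [Fin.le_def]; simp; omega)
    have h2 := card_dsort_ge' ((isHermitian_distMatrix T).eigenvalues)
      ⟨(p : ℕ) + 1, by omega⟩
    -- the between-set is a subset of the J₃ filter
    have hsub : (univ.filter (fun v : V =>
        dsort (hL.eigenvalues ∘ (Fintype.equivFin V).symm) ⟨Fintype.card V - 2, by omega⟩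
          ≤ hL.eigenvalues v ∧
        hL.eigenvalues v ≤ dsort (hL.eigenvalues ∘ (Fintype.equivFin V).symm) p)).card
        ≤ (univ.filter (fun v : V => 0 < hL.eigenvalues v ∧
          hL.eigenvalues v ≤ dsort (hL.eigenvalues ∘ (Fintype.equivFin V).symm) p)).card := by
      apply Finset.card_le_card
      intro v hv
      simp only [Finset.mem_filter, Finset.mem_univ, true_and] at hv ⊢
      exact ⟨lt_of_lt_of_le hqpos hv.1, hv.2⟩
    simp only [Fin.val_mk] at h1 h2
    omega

end Core



/-- (Merris interlacing) For a tree `T` on `n ≥ 2` vertices with distance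
eigenvalues `∂_1 ≥ ⋯ ≥ ∂_n` and Laplacian eigenvalues `λ_1 ≥ ⋯ ≥ λ_{n-1} > λ_n = 0`:
`0 > -2/λ_1 ≥ ∂_2`, and `∂_i ≥ -2/λ_i ≥ ∂_{i+1}` for `2 ≤ i ≤ n-1`. -/
theorem tree_distEig_lapEig_interlace (n : ℕ) (hn : 2 ≤ n) (T : SimpleGraph (Fin n))
    (hT : T.IsTree) :
    0 > -2 / lapEig T 1 ∧ -2 / lapEig T 1 ≥ distEig T 2 ∧
      ∀ i : ℕ, 2 ≤ i → i ≤ n - 1 →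
        distEig T i ≥ -2 / lapEig T i ∧ -2 / lapEig T i ≥ distEig T (i + 1) := by
  classical
  have hcV : Fintype.card (Fin n) = n := Fintype.card_fin n
  have hdist : ∀ (k : ℕ) (h : k - 1 < Fintype.card (Fin n)),
      distEig T k = dsort ((isHermitian_distMatrix T).eigenvalues
        ∘ (Fintype.equivFin (Fin n)).symm) ⟨k-1, h⟩ := by
    intro k h; rw [distEig, dif_pos h]; rfl
  have hlap : ∀ (k : ℕ) (h : k - 1 < Fintype.card (Fin n)),
      lapEig T k = dsort (((SimpleGraph.posSemidef_lapMatrix ℝ T).1).eigenvalues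
        ∘ (Fintype.equivFin (Fin n)).symm) ⟨k-1, h⟩ := by
    intro k h; rw [lapEig, dif_pos h]; rfl
  have core := fun (p : Fin (Fintype.card (Fin n))) (hp : (p : ℕ) + 2 ≤ Fintype.card (Fin n)) =>
    interlace_core T hT ((SimpleGraph.posSemidef_lapMatrix ℝ T).1) p hp
  have h0 : (1:ℕ) - 1 < Fintype.card (Fin n) := by omega
  have hp0 : ((⟨1-1, h0⟩ : Fin (Fintype.card (Fin n))) : ℕ) + 2 ≤ Fintype.card (Fin n) := by
    simp only [Fin.val_mk]; omega
  obtain ⟨hpos0, -, hup0⟩ := core ⟨1-1, h0⟩ hp0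
  have h2 : (2:ℕ) - 1 < Fintype.card (Fin n) := by omega
  refine ⟨?_, ?_, ?_⟩
  · rw [hlap 1 h0]
    exact div_neg_of_neg_of_pos (by norm_num) hpos0
  · rw [hlap 1 h0, hdist 2 h2, ge_iff_le]
    have hmk : (⟨(1:ℕ)-1+1, by omega⟩ : Fin (Fintype.card (Fin n))) = ⟨2-1, h2⟩ :=
      Fin.mk_eq_mk.mpr (by omega)
    rw [← hmk]
    exact hup0
  · intro i hi2 hin
    have hi1 : i - 1 < Fintype.card (Fin n) := by omega
    have hpi : ((⟨i-1, hi1⟩ : Fin (Fintype.card (Fin n))) : ℕ) + 2 ≤ Fintype.card (Fin n) := by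
      simp only [Fin.val_mk]; omega
    obtain ⟨hposi, hloi, hupi⟩ := core ⟨i-1, hi1⟩ hpi
    have hii : i < Fintype.card (Fin n) := by omega
    have hI : i + 1 - 1 < Fintype.card (Fin n) := by omega
    constructor
    · rw [hlap i hi1, hdist i hi1, ge_iff_le]
      exact hloi
    · rw [hlap i hi1, hdist (i+1) hI, ge_iff_le]
      have hmk : (⟨i-1+1, by omega⟩ : Fin (Fintype.card (Fin n))) = ⟨i+1-1, hI⟩ :=
        Fin.mk_eq_mk.mpr (by omega)
      rw [← hmk]
      exact hupi

end DistPaper
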